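/- For each integer ℓ ≥ 1, the Hilbert adjoint of the operator S_ℓ[f](x) = f(x) - 4ℓ x^{2ℓ-1} ∫ₓ¹ t^{-2ℓ} f(t) dt on L²(0,1) is given by S_ℓ*[g](x) = g(x) - (4ℓ/x^{2ℓ}) ∫₀ˣ t^{2ℓ-1} g(t) dt. -/

import Mathlib

open MeasureTheory Set intervalIntegral

noncomputable instance : IsFiniteMeasure (volume.restrict (Ioo (0:ℝ) 1)) :=
  ⟨by simp [Measure.restrict_apply_univ]⟩

lemma izpow_bound {n : ℕ} (hn : 2 ≤ n) {t : ℝ} (ht0 : 0 < t) (ht1 : t ≤ 1) :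
    ∫ x in Ioo t 1, ((x:ℝ)^n)⁻¹ ∂volume ≤ (t^(n-1))⁻¹ := by
  have h1 : (volume : Measure ℝ).restrict (Ioo t 1) = volume.restrict (Ioc t 1) :=
    Measure.restrict_congr_set Ioo_ae_eq_Ioc
  rw [h1]
  have h2 : ∫ x in Ioc t 1, ((x:ℝ)^n)⁻¹ ∂volume = ∫ x in t..1, (x:ℝ) ^ (-(n:ℤ)) ∂volume := by
    rw [intervalIntegral.integral_of_le ht1]
    apply setIntegral_congr_fun measurableSet_Ioc
    intro x hx
    simp only [zpow_neg, zpow_natCast]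
  rw [h2, integral_zpow (.inr ⟨by omega, by
      simp only [uIcc_of_le ht1, mem_Icc, not_and, not_le]
      intro h; linarith⟩)]
  have hne : t ≠ 0 := ht0.ne'
  have hA : t ^ (-(n:ℤ) + 1) = (t ^ (n-1))⁻¹ := by
    rw [← zpow_natCast t (n-1), ← zpow_neg]
    congr 1
    omega
  rw [one_zpow, hA]
  set A := (t ^ (n-1))⁻¹ with hAdef
  have hA1 : 1 ≤ A := by
    rw [hAdef, one_le_inv_iff₀]
    exact ⟨by positivity, pow_le_one₀ ht0.le ht1⟩
  have hden : (1:ℝ) ≤ (n:ℝ) - 1 := by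
    have : (2:ℝ) ≤ n := by exact_mod_cast hn
    linarith
  have hc : ((-(n:ℤ) : ℤ) : ℝ) + 1 = -((n:ℝ) - 1) := by push_cast; ring
  rw [hc, div_le_iff_of_neg (by linarith)]
  nlinarith

lemma restrict_Ioi {x : ℝ} (hx : 0 ≤ x) :
    (volume.restrict (Ioo (0:ℝ) 1)).restrict (Ioi x) = volume.restrict (Ioo x 1) := by
  rw [Measure.restrict_restrict measurableSet_Ioi]
  congr 1
  ext t
  simp only [mem_inter_iff, mem_Ioi, mem_Ioo]
  constructor
  · rintro ⟨h1, _, h3⟩; exact ⟨h1, h3⟩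
  · rintro ⟨h1, h2⟩; exact ⟨h1, lt_of_le_of_lt hx h1, h2⟩

lemma restrict_Iio {x : ℝ} (hx : x ≤ 1) :
    (volume.restrict (Ioo (0:ℝ) 1)).restrict (Iio x) = volume.restrict (Ioo 0 x) := by
  rw [Measure.restrict_restrict measurableSet_Iio]
  congr 1
  ext t
  simp only [mem_inter_iff, mem_Iio, mem_Ioo]
  constructor
  · rintro ⟨h1, h2, _⟩; exact ⟨h2, h1⟩
  · rintro ⟨h1, h2⟩; exact ⟨h2, h1, lt_of_lt_of_le h2 hx⟩

lemma integral_ite_gt (F : ℝ → ℝ) {x : ℝ} (hx : 0 ≤ x) :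
    ∫ t, (if x < t then F t else 0) ∂(volume.restrict (Ioo (0:ℝ) 1))
      = ∫ t in Ioo x 1, F t ∂volume := by
  have : (fun t => if x < t then F t else 0) = (Ioi x).indicator F := by
    funext t
    rw [Set.indicator_apply]
    simp [mem_Ioi]
  rw [this, MeasureTheory.integral_indicator measurableSet_Ioi, restrict_Ioi hx]

lemma integral_ite_lt (F : ℝ → ℝ) {x : ℝ} (hx : x ≤ 1) :
    ∫ t, (if t < x then F t else 0) ∂(volume.restrict (Ioo (0:ℝ) 1))
      = ∫ t in Ioo 0 x, F t ∂volume := by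
  have : (fun t => if t < x then F t else 0) = (Iio x).indicator F := by
    funext t
    rw [Set.indicator_apply]
    simp [mem_Iio]
  rw [this, MeasureTheory.integral_indicator measurableSet_Iio, restrict_Iio hx]

lemma ker_meas {m n : ℕ} {G h : ℝ → ℝ} (hG : StronglyMeasurable G) (hh : Measurable h) :
    StronglyMeasurable (fun p : ℝ × ℝ =>
      p.1 ^ m * G p.1 * (if p.1 < p.2 then (p.2 ^ n)⁻¹ * h p.2 else 0)) := by
  apply StronglyMeasurable.mul
  · exact ((measurable_fst.pow_const m).mul
      (hG.measurable.comp measurable_fst)).stronglyMeasurable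
  · apply Measurable.stronglyMeasurable
    apply Measurable.ite (measurableSet_lt measurable_fst measurable_snd)
    · exact ((measurable_snd.pow_const n).inv).mul (hh.comp measurable_snd)
    · exact measurable_const

lemma ker_int {n : ℕ} (hn : 2 ≤ n) {G h : ℝ → ℝ} (hG : StronglyMeasurable G)
    (hGi : Integrable G (volume.restrict (Ioo (0:ℝ) 1))) (hh : Measurable h)
    (hb : ∀ t, |h t| ≤ 1) :
    Integrable (fun p : ℝ × ℝ =>
        p.1 ^ (n-1) * G p.1 * (if p.1 < p.2 then (p.2 ^ n)⁻¹ * h p.2 else 0))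
      ((volume.restrict (Ioo (0:ℝ) 1)).prod (volume.restrict (Ioo (0:ℝ) 1))) := by
  set μ := volume.restrict (Ioo (0:ℝ) 1) with hμ
  rw [integrable_prod_iff (ker_meas hG hh).aestronglyMeasurable]
  constructor
  · filter_upwards [ae_restrict_mem measurableSet_Ioo] with x hx
    obtain ⟨hx0, hx1⟩ := hx
    apply Integrable.mono' (integrable_const (|x ^ (n-1) * G x| * (x^n)⁻¹))
    · apply Measurable.aestronglyMeasurable
      apply Measurable.mul measurable_const
      apply Measurable.ite (measurableSet_lt measurable_const measurable_id)
      · exact ((measurable_id.pow_const n).inv).mul hh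
      · exact measurable_const
    · filter_upwards with t
      rw [norm_mul]
      rw [Real.norm_eq_abs, Real.norm_eq_abs]
      apply mul_le_mul_of_nonneg_left _ (abs_nonneg _)
      by_cases hxt : x < t
      · simp only [hxt, if_true]
        have ht0 : 0 < t := hx0.trans hxt
        rw [abs_mul, abs_inv, abs_pow, abs_of_pos ht0]
        have h1 : (t ^ n)⁻¹ * |h t| ≤ (t ^ n)⁻¹ * 1 :=
          mul_le_mul_of_nonneg_left (hb t) (by positivity)
        have h2 : (t ^ n)⁻¹ ≤ (x ^ n)⁻¹ := by
          apply inv_anti₀ (by positivity)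
          exact pow_le_pow_left₀ hx0.le hxt.le n
        calc (t ^ n)⁻¹ * |h t| ≤ (t ^ n)⁻¹ * 1 := h1
          _ = (t ^ n)⁻¹ := mul_one _
          _ ≤ (x ^ n)⁻¹ := h2
      · simp only [hxt, if_false, abs_zero]
        positivity
  · apply Integrable.mono' hGi.abs
    · exact ((ker_meas hG hh).norm.aestronglyMeasurable).integral_prod_right'
    · filter_upwards [ae_restrict_mem measurableSet_Ioo] with x hx
      obtain ⟨hx0, hx1⟩ := hx
      have hxm : (0:ℝ) < x ^ (n-1) := by positivity
      have e1 : ∫ t, ‖x ^ (n-1) * G x * (if x < t then (t^n)⁻¹ * h t else 0)‖ ∂μ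
          = |x ^ (n-1) * G x| * ∫ t, ‖(if x < t then (t^n)⁻¹ * h t else 0)‖ ∂μ := by
        simp_rw [norm_mul]
        rw [MeasureTheory.integral_const_mul]
        rw [Real.norm_eq_abs, Real.norm_eq_abs, ← abs_mul]
      have e2 : ∫ t, ‖(if x < t then (t^n)⁻¹ * h t else 0)‖ ∂μ
          ≤ ∫ t, (if x < t then (t^n)⁻¹ else 0) ∂μ := by
        apply integral_mono_of_nonneg
        · filter_upwards with t; positivity
        · apply Integrable.mono' (integrable_const ((x^n)⁻¹))
          · apply Measurable.aestronglyMeasurable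
            apply Measurable.ite (measurableSet_lt measurable_const measurable_id)
              ((measurable_id.pow_const n).inv) measurable_const
          · filter_upwards with t
            by_cases hxt : x < t
            · simp only [hxt, if_true, Real.norm_eq_abs]
              rw [abs_inv, abs_pow, abs_of_pos (hx0.trans hxt)]
              apply inv_anti₀ (by positivity)
              exact pow_le_pow_left₀ hx0.le hxt.le n
            · simp only [hxt, if_false, norm_zero]
              positivity
        · filter_upwards with t
          by_cases hxt : x < t
          · simp only [hxt, if_true, Real.norm_eq_abs]
            have ht0 : (0:ℝ) < t := hx0.trans hxt
            rw [abs_mul, abs_inv, abs_pow, abs_of_pos ht0]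
            calc (t^n)⁻¹ * |h t| ≤ (t^n)⁻¹ * 1 :=
                  mul_le_mul_of_nonneg_left (hb t) (by positivity)
              _ = (t^n)⁻¹ := mul_one _
          · simp [hxt]
      have e3 : ∫ t, (if x < t then (t^n)⁻¹ else 0) ∂μ ≤ (x ^ (n-1))⁻¹ := by
        rw [hμ, integral_ite_gt _ hx0.le]
        exact izpow_bound hn hx0 hx1.le
      have e4 : (0:ℝ) ≤ ∫ t, ‖(if x < t then (t^n)⁻¹ * h t else 0)‖ ∂μ :=
        integral_nonneg (fun t => norm_nonneg _)
      rw [Real.norm_eq_abs, abs_of_nonneg (by rw [e1]; positivity)]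
      rw [e1, abs_mul, abs_pow, abs_of_pos hx0]
      calc x ^ (n-1) * |G x| * ∫ t, ‖(if x < t then (t^n)⁻¹ * h t else 0)‖ ∂μ
          ≤ x ^ (n-1) * |G x| * (x ^ (n-1))⁻¹ := by
            apply mul_le_mul_of_nonneg_left (le_trans e2 e3) (by positivity)
        _ = |G x| := by field_simp

lemma ker_swap {n : ℕ} (hn : 2 ≤ n) {G h : ℝ → ℝ} (hG : StronglyMeasurable G)
    (hGi : Integrable G (volume.restrict (Ioo (0:ℝ) 1))) (hh : Measurable h)
    (hb : ∀ t, |h t| ≤ 1) :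
    ∫ x, x ^ (n-1) * G x * (∫ t in Ioo x 1, (t^n)⁻¹ * h t ∂volume)
        ∂(volume.restrict (Ioo (0:ℝ) 1))
      = ∫ t, (∫ x in Ioo 0 t, x ^ (n-1) * G x ∂volume) * ((t^n)⁻¹ * h t)
        ∂(volume.restrict (Ioo (0:ℝ) 1)) := by
  set μ := volume.restrict (Ioo (0:ℝ) 1) with hμ
  have hker := ker_int hn hG hGi hh hb
  have swap := MeasureTheory.integral_integral_swap
    (f := fun x t => x ^ (n-1) * G x * (if x < t then (t^n)⁻¹ * h t else 0)) hker
  have e1 : ∫ x, x ^ (n-1) * G x * (∫ t in Ioo x 1, (t^n)⁻¹ * h t ∂volume) ∂μ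
      = ∫ x, (∫ t, x ^ (n-1) * G x * (if x < t then (t^n)⁻¹ * h t else 0) ∂μ) ∂μ := by
    apply MeasureTheory.integral_congr_ae
    filter_upwards [ae_restrict_mem measurableSet_Ioo] with x hx
    rw [MeasureTheory.integral_const_mul, hμ, integral_ite_gt _ hx.1.le]
  have e2 : ∫ t, (∫ x, x ^ (n-1) * G x * (if x < t then (t^n)⁻¹ * h t else 0) ∂μ) ∂μ
      = ∫ t, (∫ x in Ioo 0 t, x ^ (n-1) * G x ∂volume) * ((t^n)⁻¹ * h t) ∂μ := by
    apply MeasureTheory.integral_congr_ae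
    filter_upwards [ae_restrict_mem measurableSet_Ioo] with t ht
    have : ∀ x : ℝ, x ^ (n-1) * G x * (if x < t then (t^n)⁻¹ * h t else 0)
        = (if x < t then x ^ (n-1) * G x * ((t^n)⁻¹ * h t) else 0) := by
      intro x
      by_cases hxt : x < t <;> simp [hxt]
    simp_rw [this]
    rw [hμ, integral_ite_lt _ ht.2.le, ← MeasureTheory.integral_mul_const]
  rw [e1, swap, e2]

lemma inner_left_eq {n : ℕ} (G h : ℝ → ℝ) {x : ℝ} (hx0 : 0 ≤ x) :
    ∫ t, x ^ (n-1) * G x * (if x < t then (t^n)⁻¹ * h t else 0)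
        ∂(volume.restrict (Ioo (0:ℝ) 1))
      = x ^ (n-1) * G x * ∫ t in Ioo x 1, (t^n)⁻¹ * h t ∂volume := by
  rw [MeasureTheory.integral_const_mul, integral_ite_gt _ hx0]

lemma inner_right_eq {n : ℕ} (G h : ℝ → ℝ) {t : ℝ} (ht1 : t ≤ 1) :
    ∫ x, x ^ (n-1) * G x * (if x < t then (t^n)⁻¹ * h t else 0)
        ∂(volume.restrict (Ioo (0:ℝ) 1))
      = (∫ x in Ioo 0 t, x ^ (n-1) * G x ∂volume) * ((t^n)⁻¹ * h t) := by
  have e : ∀ x : ℝ, x ^ (n-1) * G x * (if x < t then (t^n)⁻¹ * h t else 0)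
      = (if x < t then x ^ (n-1) * G x * ((t^n)⁻¹ * h t) else 0) := by
    intro x
    by_cases hxt : x < t <;> simp [hxt]
  simp_rw [e]
  rw [integral_ite_lt _ ht1, ← MeasureTheory.integral_mul_const]

theorem stmt3 (ℓ : ℕ) (hℓ : 1 ≤ ℓ)
    (T : (Lp ℝ 2 (volume.restrict (Ioo (0:ℝ) 1))) →L[ℝ]
         (Lp ℝ 2 (volume.restrict (Ioo (0:ℝ) 1))))
    (hT : ∀ f : Lp ℝ 2 (volume.restrict (Ioo (0:ℝ) 1)),
      ⇑(T f) =ᵐ[volume.restrict (Ioo (0:ℝ) 1)]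
        fun x => f x - 4 * ℓ * x ^ (2 * ℓ - 1) * ∫ t in x..1, (t ^ (2 * ℓ))⁻¹ * f t) :
    ∀ g : Lp ℝ 2 (volume.restrict (Ioo (0:ℝ) 1)),
      ⇑((ContinuousLinearMap.adjoint T) g) =ᵐ[volume.restrict (Ioo (0:ℝ) 1)]
        fun x => g x - (4 * ℓ / x ^ (2 * ℓ)) * ∫ t in (0:ℝ)..x, t ^ (2 * ℓ - 1) * g t := by
  intro g
  have hn : 2 ≤ 2*ℓ := by omega
  set G : ℝ → ℝ := ⇑g with hGdef
  have hGm : StronglyMeasurable G := Lp.stronglyMeasurable g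
  have hGi : Integrable G (volume.restrict (Ioo (0:ℝ) 1)) := MemLp.integrable one_le_two (Lp.memLp g)
  set u := (ContinuousLinearMap.adjoint T) g with hu
  have hui : Integrable (⇑u) (volume.restrict (Ioo (0:ℝ) 1)) := MemLp.integrable one_le_two (Lp.memLp u)
  set P : ℝ → ℝ := fun t => ∫ x in Ioo 0 t, x ^ (2*ℓ-1) * G x ∂volume with hP
  set ψ : ℝ → ℝ := fun x => (4*ℓ/x^(2*ℓ)) * ∫ t in (0:ℝ)..x, t^(2*ℓ-1) * G t with hψ
  have hPP : ∀ x : ℝ, 0 ≤ x → (∫ t in (0:ℝ)..x, t^(2*ℓ-1) * G t) = P x := by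
    intro x hx
    rw [intervalIntegral.integral_of_le hx, hP, integral_Ioc_eq_integral_Ioo]
  -- integrability of ψ
  have hone : ∀ t : ℝ, |(fun _ : ℝ => (1:ℝ)) t| ≤ 1 := fun t => by norm_num
  have hker1 := ker_int hn hGm hGi (measurable_const : Measurable (fun _ : ℝ => (1:ℝ))) hone
  have hInt1 : Integrable (fun t => P t * ((t^(2*ℓ))⁻¹ * 1)) (volume.restrict (Ioo (0:ℝ) 1)) := by
    apply (hker1.integral_prod_right).congr
    filter_upwards [ae_restrict_mem measurableSet_Ioo] with t ht
    exact inner_right_eq G (fun _ => (1:ℝ)) ht.2.le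
  have hψae : (fun t => (4*ℓ:ℝ) * (P t * ((t^(2*ℓ))⁻¹ * 1))) =ᵐ[(volume.restrict (Ioo (0:ℝ) 1))] ψ := by
    filter_upwards [ae_restrict_mem measurableSet_Ioo] with t ht
    rw [hψ]
    simp only
    rw [hPP t ht.1.le, div_eq_mul_inv]
    ring
  have hψi : Integrable ψ (volume.restrict (Ioo (0:ℝ) 1)) := (hInt1.const_mul ((4*ℓ:ℝ))).congr hψae
  have hφi : Integrable (fun x => G x - ψ x) (volume.restrict (Ioo (0:ℝ) 1)) := hGi.sub hψi
  have main : ⇑u =ᵐ[(volume.restrict (Ioo (0:ℝ) 1))] fun x => G x - ψ x := by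
    apply ae_eq_of_forall_setIntegral_eq_of_sigmaFinite
    · exact fun s hs hμs => hui.integrableOn
    · exact fun s hs hμs => hφi.integrableOn
    · intro s hs hμs
      set h1 : ℝ → ℝ := s.indicator (fun _ => (1:ℝ)) with hh1
      have hh1m : Measurable h1 := measurable_const.indicator hs
      have hh1b : ∀ t, |h1 t| ≤ 1 := by
        intro t
        rw [hh1]
        by_cases hts : t ∈ s <;> simp [Set.indicator_apply, hts]
      set F : ℝ → ℝ := fun x => ∫ t in Ioo x 1, (t^(2*ℓ))⁻¹ * h1 t ∂volume with hF
      set fI : Lp ℝ 2 (volume.restrict (Ioo (0:ℝ) 1)) := indicatorConstLp 2 hs hμs.ne (1:ℝ) with hfIdef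
      have hind : ⇑fI =ᵐ[(volume.restrict (Ioo (0:ℝ) 1))] h1 := indicatorConstLp_coeFn
      have hindv : ∀ᵐ t ∂volume, t ∈ Ioo (0:ℝ) 1 → fI t = h1 t :=
        (ae_restrict_iff' measurableSet_Ioo).1 hind
      -- Step A
      have hA : ∫ x in s, u x ∂(volume.restrict (Ioo (0:ℝ) 1)) = (inner ℝ fI u : ℝ) := by
        rw [L2.inner_def]
        simp only [RCLike.inner_apply, conj_trivial]
        rw [← MeasureTheory.integral_indicator hs]
        apply MeasureTheory.integral_congr_ae
        filter_upwards [hind] with x hx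
        rw [hx, hh1]
        by_cases hxs : x ∈ s
        · rw [Set.indicator_of_mem hxs, Set.indicator_of_mem hxs, mul_one]
        · rw [Set.indicator_of_notMem hxs, Set.indicator_of_notMem hxs, mul_zero]
      -- Step B
      have hB : (inner ℝ fI u : ℝ) = (inner ℝ (T fI) g : ℝ) :=
        ContinuousLinearMap.adjoint_inner_right T fI g
      -- Step C
      have hC : (inner ℝ (T fI) g : ℝ)
          = ∫ x, (h1 x * G x - (4*ℓ:ℝ) * (x^(2*ℓ-1) * G x * F x)) ∂(volume.restrict (Ioo (0:ℝ) 1)) := by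
        rw [L2.inner_def]
        simp only [RCLike.inner_apply, conj_trivial]
        apply MeasureTheory.integral_congr_ae
        filter_upwards [hT fI, hind, ae_restrict_mem measurableSet_Ioo] with x hTx hIx hx
        have hFx : (∫ t in x..1, (t^(2*ℓ))⁻¹ * fI t) = F x := by
          rw [intervalIntegral.integral_of_le hx.2.le, integral_Ioc_eq_integral_Ioo, hF]
          apply MeasureTheory.setIntegral_congr_ae measurableSet_Ioo
          filter_upwards [hindv] with t htv
          intro ht
          rw [htv ⟨hx.1.trans ht.1, ht.2⟩]
        rw [hTx, hFx, hIx]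
        ring
      -- integrability for splitting
      have hkerS := ker_int hn hGm hGi hh1m hh1b
      have hIntS : Integrable (fun x => x^(2*ℓ-1) * G x * F x) (volume.restrict (Ioo (0:ℝ) 1)) := by
        apply (hkerS.integral_prod_left).congr
        filter_upwards [ae_restrict_mem measurableSet_Ioo] with x hx
        exact inner_left_eq G h1 hx.1.le
      have hIndG : Integrable (fun x => h1 x * G x) (volume.restrict (Ioo (0:ℝ) 1)) := by
        have : (fun x => h1 x * G x) = s.indicator G := by
          funext x
          rw [hh1]
          by_cases hxs : x ∈ s <;> simp [Set.indicator_apply, hxs]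
        rw [this]
        exact hGi.indicator hs
      -- Step D
      have hD : ∫ x, (h1 x * G x - (4*ℓ:ℝ) * (x^(2*ℓ-1) * G x * F x)) ∂(volume.restrict (Ioo (0:ℝ) 1))
          = ∫ x, h1 x * G x ∂(volume.restrict (Ioo (0:ℝ) 1)) - (4*ℓ:ℝ) * ∫ x, x^(2*ℓ-1) * G x * F x ∂(volume.restrict (Ioo (0:ℝ) 1)) := by
        rw [integral_sub hIndG (hIntS.const_mul _), MeasureTheory.integral_const_mul]
      -- Step E : Fubini
      have hE : ∫ x, x^(2*ℓ-1) * G x * F x ∂(volume.restrict (Ioo (0:ℝ) 1))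
          = ∫ t, P t * ((t^(2*ℓ))⁻¹ * h1 t) ∂(volume.restrict (Ioo (0:ℝ) 1)) := by
        exact ker_swap hn hGm hGi hh1m hh1b
      -- Right-hand side
      have hR : ∫ x in s, (G x - ψ x) ∂(volume.restrict (Ioo (0:ℝ) 1))
          = ∫ x, h1 x * G x ∂(volume.restrict (Ioo (0:ℝ) 1)) - (4*ℓ:ℝ) * ∫ t, P t * ((t^(2*ℓ))⁻¹ * h1 t) ∂(volume.restrict (Ioo (0:ℝ) 1)) := by
        rw [integral_sub hGi.integrableOn hψi.integrableOn]
        congr 1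
        · rw [← MeasureTheory.integral_indicator hs]
          apply MeasureTheory.integral_congr_ae
          filter_upwards with x
          rw [hh1]
          by_cases hxs : x ∈ s
          · rw [Set.indicator_of_mem hxs, Set.indicator_of_mem hxs, one_mul]
          · rw [Set.indicator_of_notMem hxs, Set.indicator_of_notMem hxs, zero_mul]
        · rw [← MeasureTheory.integral_indicator hs, ← MeasureTheory.integral_const_mul]
          apply MeasureTheory.integral_congr_ae
          filter_upwards [ae_restrict_mem measurableSet_Ioo] with t ht
          by_cases hts : t ∈ s
          · rw [Set.indicator_of_mem hts, hψ]
            simp only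
            rw [hPP t ht.1.le, hh1, Set.indicator_of_mem hts, div_eq_mul_inv]
            ring
          · rw [Set.indicator_of_notMem hts, hh1, Set.indicator_of_notMem hts]
            ring
      rw [hA, hB, hC, hD, hE, hR]
  filter_upwards [main] with x hx
  rw [hx]
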